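/- Corollary (Monotonicity of the asymptotic variance): Let E be a real Hilbert space, let W ⊆ W̄ be complete (e.g. finite-dimensional) subspaces of E, and let P_W and P_{W̄} denote the corresponding orthogonal projections. Then for any vectors s_1, …, s_m ∈ E, the Gram matrices of their projections satisfy (⟨P_W s_i, P_W s_j⟩)_{ij} ⪯ (⟨P_{W̄} s_i, P_{W̄} s_j⟩)_{ij} in the positive-semidefinite order; that is, for every c ∈ ℝ^m, ‖P_W(Σ_i c_i s_i)‖² ≤ ‖P_{W̄}(Σ_i c_i s_i)‖². Consequently, if both Gram matrices are invertible, the corresponding asymptotic variances satisfy V_{W̄} ⪯ V_W, where V_W := ((⟨P_W s_i, P_W s_j⟩)_{ij})⁻¹. -/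

import Mathlib

open Matrix
open scoped RealInnerProductSpace

lemma gram_quad {E : Type*} [NormedAddCommGroup E] [InnerProductSpace ℝ E]
    {m : ℕ} (t : Fin m → E) (x : Fin m → ℝ) :
    x ⬝ᵥ ((Matrix.of fun i j => ⟪t i, t j⟫) *ᵥ x) = ⟪∑ i, x i • t i, ∑ j, x j • t j⟫ := by
  simp [dotProduct, Matrix.mulVec, sum_inner, inner_sum, real_inner_smul_left,
    real_inner_smul_right, Finset.mul_sum, mul_comm, mul_left_comm, -inner_self_eq_norm_sq_to_K]
  exact Finset.sum_congr rfl fun a _ => Finset.sum_congr rfl fun b _ => by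
    rw [real_inner_comm]

lemma psd_cauchy_schwarz {n : Type*} [Fintype n] [DecidableEq n]
    {A : Matrix n n ℝ} (hA : A.PosSemidef) (x y : n → ℝ) :
    (x ⬝ᵥ (A *ᵥ y)) ^ 2 ≤ (x ⬝ᵥ (A *ᵥ x)) * (y ⬝ᵥ (A *ᵥ y)) := by
  open scoped MatrixOrder in
  have hA0 : 0 ≤ A := Matrix.nonneg_iff_posSemidef.mpr hA
  open scoped MatrixOrder in
  have hS := Matrix.nonneg_iff_posSemidef.mp (CFC.sqrt_nonneg A)
  open scoped MatrixOrder in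
  have hSS : CFC.sqrt A * CFC.sqrt A = A := CFC.sqrt_mul_sqrt_self A hA0
  open scoped MatrixOrder in
  have hSt : (CFC.sqrt A)ᵀ = CFC.sqrt A := by
    have h1 := hS.1
    rwa [Matrix.IsHermitian, conjTranspose_eq_transpose_of_trivial] at h1
  open scoped MatrixOrder in
  obtain ⟨S, hSt', hSS'⟩ : ∃ S : Matrix n n ℝ, Sᵀ = S ∧ S * S = A := ⟨CFC.sqrt A, hSt, hSS⟩
  have key : ∀ u v : n → ℝ, u ⬝ᵥ (A *ᵥ v) = (S *ᵥ u) ⬝ᵥ (S *ᵥ v) := by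
    intro u v
    rw [← hSS', ← Matrix.mulVec_mulVec, Matrix.dotProduct_mulVec, ← Matrix.mulVec_transpose, hSt']
  rw [key, key, key]
  simpa [dotProduct, sq] using
    Finset.sum_mul_sq_le_sq_mul_sq Finset.univ (S *ᵥ x) (S *ᵥ y)

lemma inv_sub_inv_psd {n : Type*} [Fintype n] [DecidableEq n]
    {A B : Matrix n n ℝ} (hA : A.PosSemidef) (hBA : (B - A).PosSemidef)
    (hAd : IsUnit A.det) (hBd : IsUnit B.det) : (A⁻¹ - B⁻¹).PosSemidef := by
  have hB : B.PosSemidef := by simpa using hBA.add hA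
  refine .of_dotProduct_mulVec_nonneg ?_ ?_
  · exact (hA.1.inv).sub (hB.1.inv)
  intro x
  have hsx : star x = x := by simp
  rw [hsx]
  set u := A⁻¹ *ᵥ x with hu
  set v := B⁻¹ *ᵥ x with hv
  have hAu : A *ᵥ u = x := by
    rw [hu, Matrix.mulVec_mulVec, Matrix.mul_nonsing_inv _ hAd, Matrix.one_mulVec]
  have hBv : B *ᵥ v = x := by
    rw [hv, Matrix.mulVec_mulVec, Matrix.mul_nonsing_inv _ hBd, Matrix.one_mulVec]
  set p := v ⬝ᵥ (B *ᵥ v) with hp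
  set q := u ⬝ᵥ (A *ᵥ u) with hq
  have hp0 : 0 ≤ p := by simpa using hB.dotProduct_mulVec_nonneg v
  have hq0 : 0 ≤ q := by simpa using hA.dotProduct_mulVec_nonneg u
  have hvA : v ⬝ᵥ (A *ᵥ v) ≤ p := by
    have h0 := hBA.dotProduct_mulVec_nonneg v
    simp only [star_trivial, Matrix.sub_mulVec, dotProduct_sub] at h0
    linarith
  have hcs : (v ⬝ᵥ (A *ᵥ u)) ^ 2 ≤ (v ⬝ᵥ (A *ᵥ v)) * q := psd_cauchy_schwarz hA v u
  have hpx : p = v ⬝ᵥ (A *ᵥ u) := by rw [hAu, ← hBv, hp]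
  have hpq : p ^ 2 ≤ p * q := by
    rw [hpx]
    calc (v ⬝ᵥ (A *ᵥ u)) ^ 2 ≤ (v ⬝ᵥ (A *ᵥ v)) * q := hcs
      _ ≤ (v ⬝ᵥ (A *ᵥ u)) * q := by rw [← hpx]; exact mul_le_mul_of_nonneg_right hvA hq0
  have hgoal : x ⬝ᵥ ((A⁻¹ - B⁻¹) *ᵥ x) = q - p := by
    rw [Matrix.sub_mulVec, dotProduct_sub, ← hu, ← hv]
    congr 1
    · rw [hq, ← hAu]; exact dotProduct_comm _ _
    · rw [hp, ← hBv]; exact dotProduct_comm _ _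
  rw [hgoal]
  nlinarith [hp0, hq0, hpq]

lemma proj_coe_sum {E : Type*} [NormedAddCommGroup E] [InnerProductSpace ℝ E]
    (V : Submodule ℝ E) [CompleteSpace V] {m : ℕ} (s : Fin m → E) (x : Fin m → ℝ) :
    (Submodule.orthogonalProjectionOnto V (∑ i, x i • s i) : E) =
      ∑ i, x i • (Submodule.orthogonalProjectionOnto V (s i) : E) := by
  simp [map_sum, _root_.map_smul]

lemma gram_psd {E : Type*} [NormedAddCommGroup E] [InnerProductSpace ℝ E]
    {m : ℕ} (t : Fin m → E) :
    (Matrix.of fun i j => ⟪t i, t j⟫ : Matrix (Fin m) (Fin m) ℝ).PosSemidef := by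
  refine .of_dotProduct_mulVec_nonneg ?_ ?_
  · ext i j
    simp only [Matrix.conjTranspose_apply, Matrix.of_apply, star_trivial]
    exact real_inner_comm _ _
  · intro x
    rw [star_trivial, gram_quad]
    exact real_inner_self_nonneg

/-- **Corollary (Monotonicity of the asymptotic variance).**
If `W ⊆ W̄` are complete subspaces of a real Hilbert space, then for any `s₁, …, s_m` the
Gram matrix of the projections onto `W` is dominated (in the positive-semidefinite order)
by that of the projections onto `W̄`; equivalently `‖P_W(Σ cᵢ sᵢ)‖² ≤ ‖P_W̄(Σ cᵢ sᵢ)‖²`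
for every `c`.  Consequently, if both Gram matrices are invertible, the corresponding
asymptotic variances satisfy `V_W̄ ⪯ V_W`. -/
theorem asymptotic_variance_monotonicity
    {E : Type*} [NormedAddCommGroup E] [InnerProductSpace ℝ E]
    (W Wbar : Submodule ℝ E) [CompleteSpace W] [CompleteSpace Wbar]
    (hsub : W ≤ Wbar)
    {m : ℕ} (s : Fin m → E) :
    (∀ c : Fin m → ℝ,
      ‖(Submodule.orthogonalProjectionOnto W (∑ i, c i • s i) : E)‖ ^ 2 ≤
        ‖(Submodule.orthogonalProjectionOnto Wbar (∑ i, c i • s i) : E)‖ ^ 2) ∧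
    ((Matrix.of fun i j =>
        ⟪(Submodule.orthogonalProjectionOnto Wbar (s i) : E), (Submodule.orthogonalProjectionOnto Wbar (s j) : E)⟫) -
      (Matrix.of fun i j =>
        ⟪(Submodule.orthogonalProjectionOnto W (s i) : E), (Submodule.orthogonalProjectionOnto W (s j) : E)⟫)).PosSemidef ∧
    (IsUnit (Matrix.of fun i j =>
        ⟪(Submodule.orthogonalProjectionOnto W (s i) : E), (Submodule.orthogonalProjectionOnto W (s j) : E)⟫ :
          Matrix (Fin m) (Fin m) ℝ).det →
      IsUnit (Matrix.of fun i j =>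
        ⟪(Submodule.orthogonalProjectionOnto Wbar (s i) : E), (Submodule.orthogonalProjectionOnto Wbar (s j) : E)⟫ :
          Matrix (Fin m) (Fin m) ℝ).det →
      ((Matrix.of fun i j =>
          ⟪(Submodule.orthogonalProjectionOnto W (s i) : E), (Submodule.orthogonalProjectionOnto W (s j) : E)⟫)⁻¹ -
        (Matrix.of fun i j =>
          ⟪(Submodule.orthogonalProjectionOnto Wbar (s i) : E),
            (Submodule.orthogonalProjectionOnto Wbar (s j) : E)⟫)⁻¹).PosSemidef) := by
  have hnorm : ∀ x : E,
      ‖(Submodule.orthogonalProjectionOnto W x : E)‖ ≤ ‖(Submodule.orthogonalProjectionOnto Wbar x : E)‖ := by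
    intro x
    rw [← Submodule.orthogonalProjectionOnto_starProjection_of_le hsub x]
    calc ‖(Submodule.orthogonalProjectionOnto W ((Submodule.orthogonalProjectionOnto Wbar x : E)) : E)‖
        ≤ ‖Submodule.orthogonalProjectionOnto W‖ * ‖(Submodule.orthogonalProjectionOnto Wbar x : E)‖ :=
          (Submodule.orthogonalProjectionOnto W).le_opNorm _
      _ ≤ 1 * ‖(Submodule.orthogonalProjectionOnto Wbar x : E)‖ :=
          mul_le_mul_of_nonneg_right (Submodule.orthogonalProjectionOnto_norm_le W) (norm_nonneg _)
      _ = ‖(Submodule.orthogonalProjectionOnto Wbar x : E)‖ := one_mul _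
  have part1 : ∀ c : Fin m → ℝ,
      ‖(Submodule.orthogonalProjectionOnto W (∑ i, c i • s i) : E)‖ ^ 2 ≤
        ‖(Submodule.orthogonalProjectionOnto Wbar (∑ i, c i • s i) : E)‖ ^ 2 := fun c =>
    pow_le_pow_left₀ (norm_nonneg _) (hnorm _) 2
  have hW := gram_psd (fun i => (Submodule.orthogonalProjectionOnto W (s i) : E))
  have hWbar := gram_psd (fun i => (Submodule.orthogonalProjectionOnto Wbar (s i) : E))
  have quadW : ∀ x : Fin m → ℝ,
      x ⬝ᵥ ((Matrix.of fun i j =>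
        ⟪(Submodule.orthogonalProjectionOnto W (s i) : E), (Submodule.orthogonalProjectionOnto W (s j) : E)⟫) *ᵥ x) =
      ‖(Submodule.orthogonalProjectionOnto W (∑ i, x i • s i) : E)‖ ^ 2 := by
    intro x
    rw [gram_quad, ← proj_coe_sum, real_inner_self_eq_norm_sq]
  have quadWbar : ∀ x : Fin m → ℝ,
      x ⬝ᵥ ((Matrix.of fun i j =>
        ⟪(Submodule.orthogonalProjectionOnto Wbar (s i) : E), (Submodule.orthogonalProjectionOnto Wbar (s j) : E)⟫) *ᵥ x) =
      ‖(Submodule.orthogonalProjectionOnto Wbar (∑ i, x i • s i) : E)‖ ^ 2 := by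
    intro x
    rw [gram_quad, ← proj_coe_sum, real_inner_self_eq_norm_sq]
  have part2 : ((Matrix.of fun i j =>
        ⟪(Submodule.orthogonalProjectionOnto Wbar (s i) : E), (Submodule.orthogonalProjectionOnto Wbar (s j) : E)⟫) -
      (Matrix.of fun i j =>
        ⟪(Submodule.orthogonalProjectionOnto W (s i) : E), (Submodule.orthogonalProjectionOnto W (s j) : E)⟫)).PosSemidef := by
    refine .of_dotProduct_mulVec_nonneg (hWbar.1.sub hW.1) ?_
    intro x
    rw [star_trivial, Matrix.sub_mulVec, dotProduct_sub, sub_nonneg, quadW, quadWbar]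
    exact part1 x
  exact ⟨part1, part2, fun hdW hdWbar => inv_sub_inv_psd hW part2 hdW hdWbar⟩
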